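/- Let R = F[[π]] be the power series ring over a finite field F with |F| > 2. Then the commutator subgroup of GL(2,R) is SL(2,R). -/

import Mathlib

open Matrix
open scoped commutatorElement

section Elem
variable {R : Type*} [CommRing R]

/-- Elementary matrix `E₁₂(t)` as an element of `GL 2 R`. -/
def myE12 (t : R) : GL (Fin 2) R :=
  ⟨!![1, t; 0, 1], !![1, -t; 0, 1],
    by simp [Matrix.mul_fin_two, Matrix.one_fin_two],
    by simp [Matrix.mul_fin_two, Matrix.one_fin_two]⟩

/-- Elementary matrix `E₂₁(t)` as an element of `GL 2 R`. -/
def myE21 (t : R) : GL (Fin 2) R :=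
  ⟨!![1, 0; t, 1], !![1, 0; -t, 1],
    by simp [Matrix.mul_fin_two, Matrix.one_fin_two],
    by simp [Matrix.mul_fin_two, Matrix.one_fin_two]⟩

/-- The swap matrix as an element of `GL 2 R`. -/
def mySwap : GL (Fin 2) R :=
  ⟨!![0, 1; 1, 0], !![0, 1; 1, 0],
    by simp [Matrix.mul_fin_two, Matrix.one_fin_two],
    by simp [Matrix.mul_fin_two, Matrix.one_fin_two]⟩

/-- The diagonal matrix `diag(v, 1)` as an element of `GL 2 R`. -/
def myDiag (v : Rˣ) : GL (Fin 2) R :=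
  ⟨!![(v : R), 0; 0, 1], !![((v⁻¹ : Rˣ) : R), 0; 0, 1],
    by simp [Matrix.mul_fin_two, Matrix.one_fin_two],
    by simp [Matrix.mul_fin_two, Matrix.one_fin_two]⟩

lemma myE21_eq_conj (t : R) : myE21 t = mySwap * myE12 t * mySwap⁻¹ := by
  apply Units.ext
  show (!![1, 0; t, 1] : Matrix (Fin 2) (Fin 2) R) = !![0,1;1,0] * !![1,t;0,1] * !![0,1;1,0]
  simp [Matrix.mul_fin_two]

lemma myE12_commutator (v : Rˣ) (s : R) :
    ⁅myDiag v, myE12 s⁆ = myE12 (((v : R) - 1) * s) := by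
  apply Units.ext
  show (!![(v:R),0;0,1] * !![1,s;0,1] * !![((v⁻¹:Rˣ):R),0;0,1] * !![1,-s;0,1]
      : Matrix (Fin 2) (Fin 2) R) = !![1, ((v:R)-1)*s; 0, 1]
  have hv : (v : R) * ((v⁻¹ : Rˣ) : R) = 1 := v.mul_inv
  simp only [Matrix.mul_fin_two]
  ext i j
  fin_cases i <;> fin_cases j <;> simp <;>
    first
      | ring
      | linear_combination hv
      | linear_combination s * hv
      | linear_combination (-s) * hv

/-- Every `E₁₂(t)` lies in the commutator subgroup, provided there is a unit `v`
with `v - 1` a unit. -/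
lemma myE12_mem (v w : Rˣ) (hw : (w : R) = (v : R) - 1) (t : R) :
    myE12 t ∈ commutator (GL (Fin 2) R) := by
  have : myE12 t = ⁅myDiag v, myE12 (((w⁻¹ : Rˣ) : R) * t)⁆ := by
    rw [myE12_commutator, ← hw, ← mul_assoc, w.mul_inv, one_mul]
  rw [this]
  exact Subgroup.commutator_mem_commutator (Subgroup.mem_top _) (Subgroup.mem_top _)

lemma myE21_mem (v w : Rˣ) (hw : (w : R) = (v : R) - 1) (t : R) :
    myE21 t ∈ commutator (GL (Fin 2) R) := by
  rw [myE21_eq_conj]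
  exact (Subgroup.Normal.conj_mem inferInstance _ (myE12_mem v w hw t) _)

/-- Decomposition: if the lower-left entry of `g` is a unit and `det g = 1`,
then `g` is a product of three elementary matrices. -/
lemma myDecomp (g : GL (Fin 2) R) (hdet : (↑g : Matrix (Fin 2) (Fin 2) R).det = 1)
    (c : Rˣ) (hc : (↑g : Matrix (Fin 2) (Fin 2) R) 1 0 = (c : R)) :
    g = myE12 (((↑g : Matrix (Fin 2) (Fin 2) R) 0 0 - 1) * ((c⁻¹ : Rˣ) : R)) *
        myE21 (c : R) *
        myE12 (((↑g : Matrix (Fin 2) (Fin 2) R) 1 1 - 1) * ((c⁻¹ : Rˣ) : R)) := by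
  set a := (↑g : Matrix (Fin 2) (Fin 2) R) 0 0 with ha
  set b := (↑g : Matrix (Fin 2) (Fin 2) R) 0 1 with hb
  set d := (↑g : Matrix (Fin 2) (Fin 2) R) 1 1 with hd
  set e := ((c⁻¹ : Rˣ) : R) with he
  have hec : e * (c : R) = 1 := c.inv_mul
  have hdet2 : a * d - b * (c : R) = 1 := by
    rw [Matrix.det_fin_two, hc] at hdet; exact hdet
  apply Units.ext
  show (↑g : Matrix (Fin 2) (Fin 2) R) =
    !![1, (a-1)*e; 0, 1] * !![1, 0; (c : R), 1] * !![1, (d-1)*e; 0, 1]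
  conv_lhs => rw [Matrix.eta_fin_two (↑g : Matrix (Fin 2) (Fin 2) R)]
  rw [← ha, ← hb, ← hd, hc]
  simp only [Matrix.mul_fin_two]
  ext i j
  fin_cases i <;> fin_cases j <;> simp <;>
    first
      | linear_combination (a-1)*hec
      | linear_combination (1-a)*hec
      | linear_combination (d-1)*hec
      | linear_combination (1-d)*hec
      | linear_combination (-(b + e*(a-1)*(d-1)))*hec + (-e)*hdet2
      | linear_combination (b + e*(a-1)*(d-1))*hec + e*hdet2

end Elem

lemma myLocalMem {R : Type*} [CommRing R] [IsLocalRing R] (v w : Rˣ)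
    (hw : (w : R) = (v : R) - 1) (g : GL (Fin 2) R)
    (hdet : (↑g : Matrix (Fin 2) (Fin 2) R).det = 1) :
    g ∈ commutator (GL (Fin 2) R) := by
  have key : ∀ g' : GL (Fin 2) R, (↑g' : Matrix (Fin 2) (Fin 2) R).det = 1 →
      IsUnit ((↑g' : Matrix (Fin 2) (Fin 2) R) 1 0) → g' ∈ commutator (GL (Fin 2) R) := by
    intro g' h1 h2
    obtain ⟨cu, hcu⟩ := h2
    rw [myDecomp g' h1 cu hcu.symm]
    exact mul_mem (mul_mem (myE12_mem v w hw _) (myE21_mem v w hw _)) (myE12_mem v w hw _)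
  by_cases hc : IsUnit ((↑g : Matrix (Fin 2) (Fin 2) R) 1 0)
  · exact key g hdet hc
  · -- upper-left entry is a unit
    have hdet2 : (↑g : Matrix (Fin 2) (Fin 2) R) 0 0 * (↑g : Matrix (Fin 2) (Fin 2) R) 1 1
        - (↑g : Matrix (Fin 2) (Fin 2) R) 0 1 * (↑g : Matrix (Fin 2) (Fin 2) R) 1 0 = 1 := by
      rw [← Matrix.det_fin_two]; exact hdet
    have ha : IsUnit ((↑g : Matrix (Fin 2) (Fin 2) R) 0 0) := by
      have h1 : IsUnit ((↑g : Matrix (Fin 2) (Fin 2) R) 0 0 * (↑g : Matrix (Fin 2) (Fin 2) R) 1 1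
          + (-((↑g : Matrix (Fin 2) (Fin 2) R) 0 1) * (↑g : Matrix (Fin 2) (Fin 2) R) 1 0)) := by
        rw [show (↑g : Matrix (Fin 2) (Fin 2) R) 0 0 * (↑g : Matrix (Fin 2) (Fin 2) R) 1 1
          + (-((↑g : Matrix (Fin 2) (Fin 2) R) 0 1) * (↑g : Matrix (Fin 2) (Fin 2) R) 1 0) = 1 by
            linear_combination hdet2]
        exact isUnit_one
      rcases IsLocalRing.isUnit_or_isUnit_of_isUnit_add h1 with h | h
      · exact isUnit_of_mul_isUnit_left h
      · exact absurd (isUnit_of_mul_isUnit_right h) hc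
    set g' : GL (Fin 2) R := myE21 1 * g with hg'
    have hval : (↑g' : Matrix (Fin 2) (Fin 2) R) = !![1,0;1,1] * (↑g : Matrix (Fin 2) (Fin 2) R) :=
      rfl
    have hentry : (↑g' : Matrix (Fin 2) (Fin 2) R) 1 0
        = (↑g : Matrix (Fin 2) (Fin 2) R) 0 0 + (↑g : Matrix (Fin 2) (Fin 2) R) 1 0 := by
      rw [hval]; simp [Matrix.mul_apply, Fin.sum_univ_two]
    have hdet' : (↑g' : Matrix (Fin 2) (Fin 2) R).det = 1 := by
      rw [hval, Matrix.det_mul, hdet]; simp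
    have hunit' : IsUnit ((↑g' : Matrix (Fin 2) (Fin 2) R) 1 0) := by
      rw [hentry]
      by_contra hcon
      have : IsUnit (((↑g : Matrix (Fin 2) (Fin 2) R) 0 0 + (↑g : Matrix (Fin 2) (Fin 2) R) 1 0)
          + (-((↑g : Matrix (Fin 2) (Fin 2) R) 1 0))) := by
        simpa using ha
      rcases IsLocalRing.isUnit_or_isUnit_of_isUnit_add this with h | h
      · exact hcon h
      · exact hc (by simpa using h.neg)
    have hg'mem := key g' hdet' hunit'
    have : g = (myE21 1)⁻¹ * g' := by rw [hg', inv_mul_cancel_left]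
    rw [this]
    exact mul_mem (inv_mem (myE21_mem v w hw 1)) hg'mem

/-- For `R = F[[π]]` with `F` finite, `|F| > 2`, the commutator subgroup of `GL(2,R)`
is `SL(2,R)`, i.e. the kernel of the determinant. -/
theorem stmt9 (F : Type*) [Field F] [Fintype F] (h : 2 < Fintype.card F) :
    commutator (GL (Fin 2) (PowerSeries F)) =
      (Matrix.GeneralLinearGroup.det :
        GL (Fin 2) (PowerSeries F) →* (PowerSeries F)ˣ).ker := by
  classical
  -- find a unit `u ≠ 0, 1` in `F`
  obtain ⟨u, hu01⟩ : ∃ u : F, u ∉ ({0, 1} : Finset F) := by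
    have hss : ({0, 1} : Finset F) ⊂ Finset.univ := by
      rw [Finset.ssubset_univ_iff]
      intro hEq
      have : Fintype.card F ≤ 2 := by
        rw [← Finset.card_univ, ← hEq]
        exact le_trans (Finset.card_insert_le _ _) (by simp)
      omega
    obtain ⟨u, _, hu⟩ := Finset.exists_of_ssubset hss
    exact ⟨u, hu⟩
  simp only [Finset.mem_insert, Finset.mem_singleton, not_or] at hu01
  obtain ⟨hu0, hu1⟩ := hu01
  set R := PowerSeries F
  set f : F →* R := (PowerSeries.C : F →+* R).toMonoidHom
  set v : Rˣ := Units.map f (Units.mk0 u hu0) with hv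
  set w : Rˣ := Units.map f (Units.mk0 (u - 1) (sub_ne_zero.mpr hu1)) with hwdef
  have hw : (w : R) = (v : R) - 1 := by
    simp only [hwdef, hv, Units.coe_map, Units.val_mk0]
    show (PowerSeries.C : F →+* R) (u - 1) = (PowerSeries.C : F →+* R) u - 1
    rw [map_sub, _root_.map_one]
  apply le_antisymm
  · exact Abelianization.commutator_subset_ker _
  · intro g hg
    have hdet : (↑g : Matrix (Fin 2) (Fin 2) R).det = 1 := by
      have h1 : Matrix.GeneralLinearGroup.det g = 1 := hg
      have h2 := Matrix.GeneralLinearGroup.val_det_apply g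
      rw [h1] at h2
      exact h2.symm
    exact myLocalMem v w hw g hdet
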